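/- arXiv:1605.02552 — 6 statements merged into one kernel-verified Lean document; each statement's English description precedes it below -/
import Mathlib

section
/- Define f(ξ,x) = log(1+ξx²) for x ≥ √(ζ/ξ) and f(ξ,x) = (2√(ξζ)/(1+ζ))·x for 0 ≤ x < √(ζ/ξ), where ζ = -1 + e^{2+W₀(-2e^{-2})} (W₀ the principal Lambert W branch) and ξ > 0. Then f(ξ,·) is concave on [0,∞) and satisfies f(ξ,x) ≥ log(1+ξx²) for all x ≥ 0. -/
open Real Set

/-- derivative of the log piece -/
lemma aux_hgd (a : ℝ) (x : ℝ) :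
    HasDerivAt (fun y => Real.log (1 + a^2 * y^2)) (2*a^2*x/(1 + a^2*x^2)) x := by
  have h1 : HasDerivAt (fun y : ℝ => 1 + a^2 * y^2) (2*a^2*x) x := by
    have := ((hasDerivAt_pow 2 x).const_mul (a^2)).const_add 1
    exact this.congr_deriv (by ring)
  have h2 : (1 + a^2*x^2) ≠ 0 := by positivity
  exact h1.log h2

/-- the tangent-line inequality -/
lemma aux_tangent {a b : ℝ} (ha : 0 < a) (hb : 1 < b)
    (htan : Real.log (1 + b^2) = 2*b^2/(1+b^2)) :
    ∀ x : ℝ, 0 ≤ x → x ≤ b/a → Real.log (1 + a^2*x^2) ≤ (2*a*b/(1+b^2)) * x := by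
  set c := 2*a*b/(1+b^2) with hc
  have hbpos : (0:ℝ) < b := lt_trans one_pos hb
  have hb2 : (0:ℝ) < 1 + b^2 := by positivity
  have hcpos : 0 < c := by rw [hc]; positivity
  set φ : ℝ → ℝ := fun t => c*t - Real.log (1 + a^2*t^2) with hφ
  have hd : ∀ t : ℝ, HasDerivAt φ (c - 2*a^2*t/(1 + a^2*t^2)) t := by
    intro t
    have h1 : HasDerivAt (fun y : ℝ => c*y) c t := by
      simpa using (hasDerivAt_id t).const_mul c
    exact h1.sub (aux_hgd a t)
  have hdiff : Differentiable ℝ φ := fun t => (hd t).differentiableAt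
  have hder : ∀ t : ℝ, deriv φ t = c - 2*a^2*t/(1 + a^2*t^2) := fun t => (hd t).deriv
  have hkey : ∀ t : ℝ, c*(1 + a^2*t^2) - 2*a^2*t = c*a^2*(t - 1/(a*b))*(t - b/a) := by
    intro t
    rw [hc]
    field_simp
    ring
  have hx1x0 : 1/(a*b) < b/a := by
    rw [div_lt_div_iff₀ (by positivity) ha]
    nlinarith [mul_lt_mul_of_pos_left (show (1:ℝ) < b*b by nlinarith) ha]
  -- monotone on [0, 1/(ab)]
  have hmono : MonotoneOn φ (Icc 0 (1/(a*b))) := by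
    apply monotoneOn_of_deriv_nonneg (convex_Icc _ _) hdiff.continuous.continuousOn
      hdiff.differentiableOn
    intro t ht
    rw [interior_Icc] at ht
    rw [hder t]
    have hpos : (0:ℝ) < 1 + a^2*t^2 := by positivity
    rw [sub_nonneg, div_le_iff₀ hpos]
    have h1 : t - 1/(a*b) ≤ 0 := by linarith [ht.2]
    have h2 : t - b/a ≤ 0 := by linarith [ht.2, hx1x0]
    nlinarith [hkey t, mul_nonneg (neg_nonneg.2 h1) (neg_nonneg.2 h2), mul_pos hcpos (pow_pos ha 2)]
  -- antitone on [1/(ab), b/a]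
  have hanti : AntitoneOn φ (Icc (1/(a*b)) (b/a)) := by
    apply antitoneOn_of_deriv_nonpos (convex_Icc _ _) hdiff.continuous.continuousOn
      hdiff.differentiableOn
    intro t ht
    rw [interior_Icc] at ht
    rw [hder t]
    have hpos : (0:ℝ) < 1 + a^2*t^2 := by positivity
    rw [sub_nonpos, le_div_iff₀ hpos]
    have h1 : 0 ≤ t - 1/(a*b) := by linarith [ht.1]
    have h2 : t - b/a ≤ 0 := by linarith [ht.2]
    nlinarith [hkey t, mul_nonneg h1 (neg_nonneg.2 h2), mul_pos hcpos (pow_pos ha 2)]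
  have hφ0 : φ 0 = 0 := by simp [hφ]
  have hφx0 : φ (b/a) = 0 := by
    have hsq : a^2*(b/a)^2 = b^2 := by field_simp
    have hcx : c*(b/a) = 2*b^2/(1+b^2) := by rw [hc]; field_simp
    rw [hφ]
    simp only
    rw [hsq, htan, hcx]
    ring
  intro x hx0 hxle
  have : 0 ≤ φ x := by
    rcases le_or_gt x (1/(a*b)) with h | h
    · have := hmono ⟨le_refl 0, by positivity⟩ ⟨hx0, h⟩ hx0
      rw [hφ0] at this; exact this
    · have := hanti ⟨h.le, hxle⟩ ⟨le_of_lt hx1x0, le_refl _⟩ hxle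
      rw [hφx0] at this; exact this
  simpa [hφ] using this

section Test
variable {a b : ℝ}

lemma aux_main (ha : 0 < a) (hb : 1 < b)
  (htan : Real.log (1 + b^2) = 2*b^2/(1+b^2))
  (f : ℝ → ℝ)
  (hf2 : ∀ x : ℝ, f x = if b/a ≤ x then Real.log (1 + a^2*x^2) else (2*a*b/(1+b^2))*x) :
  ConcaveOn ℝ (Set.Ici (0 : ℝ)) f ∧
      ∀ x : ℝ, 0 ≤ x → Real.log (1 + a^2 * x ^ 2) ≤ f x := by
  set c := 2*a*b/(1+b^2) with hc
  set x₀ := b/a with hx₀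
  have hbpos : (0:ℝ) < b := lt_trans one_pos hb
  have hx₀pos : 0 < x₀ := by rw [hx₀]; positivity
  have hb2 : (0:ℝ) < 1 + b^2 := by positivity
  have hsq : a^2*x₀^2 = b^2 := by rw [hx₀]; field_simp
  have hcx : c*x₀ = 2*b^2/(1+b^2) := by rw [hc, hx₀]; field_simp
  have htv : Real.log (1 + a^2*x₀^2) = c * x₀ := by rw [hsq, htan, hcx]
  have hfL : ∀ x ≤ x₀, f x = c * x := by
    intro x hx
    rw [hf2 x]
    rcases eq_or_lt_of_le hx with h | h
    · rw [if_pos (le_of_eq h.symm), h, htv]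
    · rw [if_neg (not_le.2 h)]
  have hfG : ∀ x, x₀ ≤ x → f x = Real.log (1 + a^2*x^2) := by
    intro x hx; rw [hf2 x, if_pos hx]
  have hdx₀ : 2*a^2*x₀/(1 + a^2*x₀^2) = c := by
    rw [hsq, hc, hx₀]; field_simp
  have hLd : ∀ x : ℝ, HasDerivAt (fun y : ℝ => c*y) c x := by
    intro x; simpa using (hasDerivAt_id x).const_mul c
  have hjunction : HasDerivAt f c x₀ := by
    have hL : HasDerivWithinAt f c (Iic x₀) x₀ :=
      ((hLd x₀).hasDerivWithinAt).congr (fun y hy => hfL y hy) (hfL x₀ le_rfl)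
    have hG : HasDerivWithinAt f c (Ici x₀) x₀ := by
      have h1 := (aux_hgd a x₀).hasDerivWithinAt (s := Ici x₀)
      rw [hdx₀] at h1
      exact h1.congr (fun y hy => hfG y hy) (hfG x₀ le_rfl)
    have := hL.union hG
    rwa [Iic_union_Ici, hasDerivWithinAt_univ] at this
  -- eventual equalities away from x₀
  have hevL : ∀ x, x < x₀ → f =ᶠ[nhds x] (fun y => c*y) :=
    fun x hx => Filter.eventuallyEq_of_mem (Iio_mem_nhds hx) (fun y hy => hfL y (le_of_lt hy))
  have hevG : ∀ x, x₀ < x → f =ᶠ[nhds x] (fun y => Real.log (1 + a^2*y^2)) :=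
    fun x hx => Filter.eventuallyEq_of_mem (Ioi_mem_nhds hx) (fun y hy => hfG y (le_of_lt hy))
  have hdiff : DifferentiableOn ℝ f (Ici 0) := by
    intro x _
    rcases lt_trichotomy x x₀ with h | h | h
    · exact (((hevL x h).differentiableAt_iff).2 (hLd x).differentiableAt).differentiableWithinAt
    · exact (h ▸ hjunction.differentiableAt).differentiableWithinAt
    · exact (((hevG x h).differentiableAt_iff).2
        (aux_hgd a x).differentiableAt).differentiableWithinAt
  have hdf1 : ∀ x, x < x₀ → deriv f x = c := by
    intro x h
    rw [(hevL x h).deriv_eq, (hLd x).deriv]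
  have hdf2 : ∀ x, x₀ ≤ x → deriv f x = 2*a^2*x/(1 + a^2*x^2) := by
    intro x h
    rcases eq_or_lt_of_le h with h | h
    · rw [← h, hjunction.deriv, hdx₀]
    · rw [(hevG x h).deriv_eq, (aux_hgd a x).deriv]
  -- antitonicity of the derivative of the log piece past x₀
  have hdle : ∀ p q, x₀ ≤ p → p ≤ q →
      2*a^2*q/(1 + a^2*q^2) ≤ 2*a^2*p/(1 + a^2*p^2) := by
    intro p q hp hpq
    have hppos : 0 < p := lt_of_lt_of_le hx₀pos hp
    have hqpos : 0 < q := lt_of_lt_of_le hppos hpq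
    have hkey : 1 ≤ a^2*p*q := by
      have h1 : a^2*(x₀*x₀) = b^2 := by rw [hx₀]; field_simp
      have h2 : x₀*x₀ ≤ p*q := mul_le_mul hp (hp.trans hpq) hx₀pos.le hppos.le
      have h3 : a^2*(x₀*x₀) ≤ a^2*(p*q) := mul_le_mul_of_nonneg_left h2 (sq_nonneg a)
      nlinarith
    rw [div_le_div_iff₀ (by positivity) (by positivity)]
    nlinarith [mul_nonneg (sub_nonneg.2 hpq) (sub_nonneg.2 hkey), sq_nonneg a,
      mul_pos (pow_pos ha 2) (mul_pos hppos hqpos)]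
  have hdc : ∀ x ≤ x₀, deriv f x = c := by
    intro x hx
    rcases eq_or_lt_of_le hx with h | h
    · rw [h, hjunction.deriv]
    · exact hdf1 x h
  have hanti : AntitoneOn (deriv f) (interior (Ici (0:ℝ))) := by
    rw [interior_Ici]
    intro p hp q hq hpq
    rcases le_or_gt q x₀ with hqx | hqx
    · rw [hdc q hqx, hdc p (hpq.trans hqx)]
    · rw [hdf2 q hqx.le]
      rcases le_or_gt p x₀ with hpx | hpx
      · rw [hdc p hpx, ← hdx₀]
        exact hdle x₀ q le_rfl hqx.le
      · rw [hdf2 p hpx.le]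
        exact hdle p q hpx.le hpq
  have hconc : ConcaveOn ℝ (Ici (0:ℝ)) f :=
    AntitoneOn.concaveOn_of_deriv (convex_Ici 0) hdiff.continuousOn
      (hdiff.mono interior_subset) hanti
  refine ⟨hconc, fun x hx => ?_⟩
  rw [hf2 x]
  split_ifs with h
  · exact le_rfl
  · push_neg at h
    exact aux_tangent ha hb htan x hx h.le

end Test


/-- With ζ = -1 + e^{2+W₀(-2e^{-2})} (W₀ the principal Lambert W branch,
characterized by w·eʷ = -2e^{-2} and w ≥ -1) and ξ > 0, the function
f(ξ,x) = log(1+ξx²) for x ≥ √(ζ/ξ), f(ξ,x) = (2√(ξζ)/(1+ζ))·x for 0 ≤ x < √(ζ/ξ),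
is concave on [0,∞) and satisfies f(ξ,x) ≥ log(1+ξx²) for all x ≥ 0. -/
theorem stmt0 (ξ w ζ : ℝ) (hξ : 0 < ξ)
    (hw : w * Real.exp w = -2 * Real.exp (-2)) (hw' : -1 ≤ w)
    (hζ : ζ = -1 + Real.exp (2 + w))
    (f : ℝ → ℝ)
    (hf : ∀ x : ℝ, f x =
      if Real.sqrt (ζ / ξ) ≤ x then Real.log (1 + ξ * x ^ 2)
      else (2 * Real.sqrt (ξ * ζ) / (1 + ζ)) * x) :
    ConcaveOn ℝ (Set.Ici (0 : ℝ)) f ∧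
      ∀ x : ℝ, 0 ≤ x → Real.log (1 + ξ * x ^ 2) ≤ f x := by
  have h1ζ : 1 + ζ = Real.exp (2 + w) := by rw [hζ]; ring
  have hζ1 : 1 < ζ := by
    have h1 : Real.exp 1 ≤ Real.exp (2 + w) := Real.exp_le_exp.2 (by linarith)
    have h2 : (2.7182818283:ℝ) < Real.exp 1 := Real.exp_one_gt_d9
    linarith [h1ζ]
  have hζpos : 0 < ζ := lt_trans one_pos hζ1
  have hwζ : w * (1 + ζ) = -2 := by
    rw [h1ζ, show (2:ℝ) + w = w + 2 by ring, Real.exp_add]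
    have : w * Real.exp w * Real.exp 2 = -2 * Real.exp (-2) * Real.exp 2 := by rw [hw]
    calc w * (Real.exp w * Real.exp 2) = w * Real.exp w * Real.exp 2 := by ring
      _ = -2 * Real.exp (-2) * Real.exp 2 := by rw [hw]
      _ = -2 * (Real.exp (-2) * Real.exp 2) := by ring
      _ = -2 * Real.exp (-2 + 2) := by rw [Real.exp_add]
      _ = -2 := by norm_num
  have htanζ : Real.log (1 + ζ) = 2 * ζ / (1 + ζ) := by
    rw [h1ζ, Real.log_exp]
    have h1 : (0:ℝ) < 1 + ζ := by linarith
    field_simp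
    nlinarith [hwζ]
  set a := Real.sqrt ξ with hadef
  set b := Real.sqrt ζ with hbdef
  have ha2 : a ^ 2 = ξ := Real.sq_sqrt hξ.le
  have hb2 : b ^ 2 = ζ := Real.sq_sqrt hζpos.le
  have hapos : 0 < a := Real.sqrt_pos.2 hξ
  have hb1 : 1 < b := by nlinarith [Real.sqrt_nonneg ζ]
  have htan : Real.log (1 + b^2) = 2*b^2/(1+b^2) := by rw [hb2]; exact htanζ
  have hsd : Real.sqrt (ζ / ξ) = b / a := Real.sqrt_div hζpos.le ξ
  have hsm : Real.sqrt (ξ * ζ) = a * b := Real.sqrt_mul hξ.le ζ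
  have hf2 : ∀ x : ℝ, f x =
      if b/a ≤ x then Real.log (1 + a^2*x^2) else (2*a*b/(1+b^2))*x := by
    intro x
    rw [hf x, hsd, hsm, ← ha2, ← hb2]; ring_nf
  have := aux_main hapos hb1 htan f hf2
  rw [ha2] at this
  exact this
end

section
/- Suppose nodes are placed in the plane with pairwise distances at least r_min > 0, and consider channel gains g(r) = G·r^{-α} with α > 2, G > 0. Then for any fixed node n, the sum over all other nodes n' of G·d(n,n')^{-α} is bounded above by a constant depending only on r_min, G, and α (uniformly in the number of nodes). -/
open scoped Classical
open MeasureTheory Metric Real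

/-- For nodes in the plane with pairwise distances at least r_min > 0 and
gains G·r^{-α} with α > 2, G > 0, the total gain received at any node from all other
nodes is bounded by a constant depending only on r_min, G, α. -/
theorem stmt4 (rmin G α : ℝ) (hrmin : 0 < rmin) (hG : 0 < G) (hα : 2 < α) :
    ∃ C : ℝ, ∀ (S : Finset (EuclideanSpace ℝ (Fin 2))),
      (∀ p ∈ S, ∀ q ∈ S, p ≠ q → rmin ≤ dist p q) →
      ∀ n ∈ S, ∑ n' ∈ S.filter (· ≠ n), G * dist n n' ^ (-α) ≤ C := by
  have hα0 : (0:ℝ) < α := by linarith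
  set c : ℝ := 3/2 + 1/rmin with hcdef
  have hc0 : (0:ℝ) < c := by positivity
  set v : ℝ := (volume (ball (0 : EuclideanSpace ℝ (Fin 2)) (rmin/2))).toReal with hvdef
  have hvpos : 0 < v := by
    rw [hvdef]
    exact ENNReal.toReal_pos
      (measure_ball_pos volume _ (by linarith : (0:ℝ) < rmin/2)).ne'
      measure_ball_lt_top.ne
  have hfin : Integrable (fun x : EuclideanSpace ℝ (Fin 2) => (1 + ‖x‖) ^ (-α)) := by
    apply integrable_one_add_norm
    rw [finrank_euclideanSpace_fin]
    exact_mod_cast hα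
  set I : ℝ := ∫ x : EuclideanSpace ℝ (Fin 2), (1 + ‖x‖) ^ (-α) with hIdef
  refine ⟨G * c ^ α * I / v, ?_⟩
  intro S hS n hn
  set f : EuclideanSpace ℝ (Fin 2) → ℝ := fun x => G * c ^ α * (1 + ‖x - n‖) ^ (-α) with hfdef
  have hf_int : Integrable f := by
    exact ((hfin.comp_sub_right n).const_mul (G * c ^ α))
  have hf_nonneg : ∀ x, 0 ≤ f x := fun x => by
    have : (0:ℝ) ≤ (1 + ‖x - n‖) ^ (-α) := rpow_nonneg (by positivity) _
    positivity
  have hf_total : ∫ x, f x = G * c ^ α * I := by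
    rw [hfdef]
    simp only []
    rw [integral_const_mul]
    congr 1
    exact integral_sub_right_eq_self (fun y => (1 + ‖y‖) ^ (-α)) n
  set S' := S.filter (· ≠ n) with hS'def
  have key : ∀ p ∈ S', G * dist n p ^ (-α) * v ≤ ∫ x in ball p (rmin/2), f x := by
    intro p hp
    obtain ⟨hpS, hpn⟩ := Finset.mem_filter.mp hp
    have hd : rmin ≤ dist n p := hS n hn p hpS (Ne.symm hpn)
    have hdpos : 0 < dist n p := lt_of_lt_of_le hrmin hd
    have hbound : ∀ x ∈ ball p (rmin/2), G * dist n p ^ (-α) ≤ f x := by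
      intro x hx
      have hxd : ‖x - n‖ ≤ dist n p + rmin/2 := by
        have h1 : dist x n ≤ dist x p + dist p n := dist_triangle x p n
        have h2 : dist x p < rmin/2 := mem_ball.mp hx
        calc ‖x - n‖ = dist x n := (dist_eq_norm x n).symm
          _ ≤ dist x p + dist p n := h1
          _ ≤ rmin/2 + dist n p := by rw [dist_comm p n]; linarith
          _ = dist n p + rmin/2 := by ring
      have hcd : 1 + ‖x - n‖ ≤ c * dist n p := by
        have h1 : (1:ℝ) ≤ dist n p / rmin := (one_le_div hrmin).mpr hd
        have h2 : rmin/2 ≤ dist n p / 2 := by linarith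
        have : 1 + ‖x - n‖ ≤ dist n p / rmin + dist n p + dist n p / 2 := by linarith
        calc 1 + ‖x - n‖ ≤ dist n p / rmin + dist n p + dist n p / 2 := this
          _ = (3/2 + 1/rmin) * dist n p := by ring
          _ = c * dist n p := by rw [hcdef]
      have hpos1 : (0:ℝ) < 1 + ‖x - n‖ := by positivity
      have hrpow : (c * dist n p) ^ (-α) ≤ (1 + ‖x - n‖) ^ (-α) :=
        rpow_le_rpow_of_nonpos hpos1 hcd (by linarith)
      have hmul : (c * dist n p) ^ (-α) = c ^ (-α) * dist n p ^ (-α) :=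
        mul_rpow hc0.le hdpos.le
      have hcc : c ^ α * c ^ (-α) = 1 := by
        rw [← rpow_add hc0]; simp
      calc G * dist n p ^ (-α)
          = G * (c ^ α * c ^ (-α)) * dist n p ^ (-α) := by rw [hcc]; ring
        _ = G * c ^ α * (c ^ (-α) * dist n p ^ (-α)) := by ring
        _ = G * c ^ α * (c * dist n p) ^ (-α) := by rw [hmul]
        _ ≤ G * c ^ α * (1 + ‖x - n‖) ^ (-α) := by
            apply mul_le_mul_of_nonneg_left hrpow
            positivity
        _ = f x := rfl
    have hv_eq : (volume (ball p (rmin/2))).toReal = v := by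
      rw [hvdef, Measure.addHaar_ball_center]
    calc G * dist n p ^ (-α) * v
        = G * dist n p ^ (-α) * (volume (ball p (rmin/2))).toReal := by rw [hv_eq]
      _ ≤ ∫ x in ball p (rmin/2), f x :=
          setIntegral_ge_of_const_le_real measurableSet_ball measure_ball_lt_top.ne
            hbound hf_int.integrableOn
  have hdisj : Set.Pairwise (↑S' : Set (EuclideanSpace ℝ (Fin 2)))
      (Function.onFun Disjoint fun p => ball p (rmin/2)) := by
    intro p hp q hq hpq
    have hpS : p ∈ S := (Finset.mem_filter.mp hp).1
    have hqS : q ∈ S := (Finset.mem_filter.mp hq).1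
    exact ball_disjoint_ball (by
      have := hS p hpS q hqS hpq
      linarith)
  have hsum_int : ∑ p ∈ S', ∫ x in ball p (rmin/2), f x
      = ∫ x in ⋃ p ∈ S', ball p (rmin/2), f x :=
    (integral_biUnion_finset S' (fun p _ => measurableSet_ball) hdisj
      (fun p _ => hf_int.integrableOn)).symm
  have hle_total : ∫ x in ⋃ p ∈ S', ball p (rmin/2), f x ≤ ∫ x, f x :=
    setIntegral_le_integral hf_int (Filter.Eventually.of_forall hf_nonneg)
  have main : (∑ p ∈ S', G * dist n p ^ (-α)) * v ≤ G * c ^ α * I := by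
    calc (∑ p ∈ S', G * dist n p ^ (-α)) * v
        = ∑ p ∈ S', G * dist n p ^ (-α) * v := by rw [Finset.sum_mul]
      _ ≤ ∑ p ∈ S', ∫ x in ball p (rmin/2), f x := Finset.sum_le_sum key
      _ = ∫ x in ⋃ p ∈ S', ball p (rmin/2), f x := hsum_int
      _ ≤ ∫ x, f x := hle_total
      _ = G * c ^ α * I := hf_total
  rw [le_div_iff₀ hvpos]
  exact main
end

section
/- Consider the optimization problem: minimize Σ_{l=1}^{L} p_l/√(q_l) over q ∈ ℝ^L subject to 0 < q_l ≤ 1 for all l and Σ q_l ≤ B, where p_l > 0 and 1 ≤ B < L. The objective is convex on the feasible set, and at any optimum, there exists μ ≥ 0 such that for each l, either q_l = 1 and p_l/2 ≥ μ, or q_l < 1 and p_l·q_l^{-3/2}/2 = μ; in particular if no q_l hits the bound 1, the optimal solution is q_l = B·p_l^{2/3}/Σ_j p_j^{2/3}, with optimal value (Σ_l p_l^{2/3})^{3/2}/√B. -/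
open Finset

lemma stmt10_tangent (c a x : ℝ) (hc : 0 ≤ c) (ha : 0 < a) (hx : 0 < x) :
    c / Real.sqrt a - c / (a * Real.sqrt a) / 2 * (x - a) ≤ c / Real.sqrt x := by
  set b := Real.sqrt a with hbdef
  set u := Real.sqrt x with hudef
  have hb : 0 < b := Real.sqrt_pos.2 ha
  have hu : 0 < u := Real.sqrt_pos.2 hx
  have hb2 : b ^ 2 = a := Real.sq_sqrt ha.le
  have hu2 : u ^ 2 = x := Real.sq_sqrt hx.le
  have key : c / u - (c / b - c / (a * b) / 2 * (x - a))
      = c * (u - b) ^ 2 * (u + 2 * b) / (2 * (b ^ 2 * b) * u) := by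
    rw [← hb2, ← hu2]; field_simp; ring
  nlinarith [mul_nonneg (mul_nonneg hc (sq_nonneg (u - b))) (by linarith : (0:ℝ) ≤ u + 2*b),
    mul_pos (mul_pos (by positivity : (0:ℝ) < 2 * (b^2*b)) hu) hu,
    div_nonneg (mul_nonneg (mul_nonneg hc (sq_nonneg (u-b))) (by linarith : (0:ℝ) ≤ u + 2*b)) (by positivity : (0:ℝ) ≤ 2*(b^2*b)*u)]

lemma stmt10_comb_pos {x y a b : ℝ} (hx : 0 < x) (hy : 0 < y) (ha : 0 ≤ a) (hb : 0 ≤ b)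
    (hab : a + b = 1) : 0 < a * x + b * y := by
  rcases eq_or_lt_of_le ha with h | h
  · have : b = 1 := by linarith
    simp [← h, this, hy]
  · nlinarith [mul_nonneg hb hy.le]

lemma stmt10_convex_step (c z x y a b : ℝ) (hc : 0 ≤ c) (hx : 0 < x) (hy : 0 < y)
    (ha : 0 ≤ a) (hb : 0 ≤ b) (hab : a + b = 1) (hz : z = a * x + b * y) :
    c / Real.sqrt z ≤ a * (c / Real.sqrt x) + b * (c / Real.sqrt y) := by
  have hzp : 0 < z := hz ▸ stmt10_comb_pos hx hy ha hb hab
  have t1 := mul_le_mul_of_nonneg_left (stmt10_tangent c z x hc hzp hx) ha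
  have t2 := mul_le_mul_of_nonneg_left (stmt10_tangent c z y hc hzp hy) hb
  have key : a * (c / Real.sqrt z - c / (z * Real.sqrt z) / 2 * (x - z))
      + b * (c / Real.sqrt z - c / (z * Real.sqrt z) / 2 * (y - z)) = c / Real.sqrt z := by
    rw [hz]
    linear_combination (c / Real.sqrt (a*x+b*y)
      + c / ((a*x+b*y) * Real.sqrt (a*x+b*y)) / 2 * (a*x+b*y)) * hab
  linarith

lemma stmt10_rpow_neg32 (x : ℝ) (hx : 0 < x) : x ^ (-(3:ℝ)/2) = 1 / (x * Real.sqrt x) := by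
  rw [show (-(3:ℝ)/2) = -(3/2) by norm_num, Real.rpow_neg hx.le,
    show ((3:ℝ)/2) = 1 + 1/2 by norm_num, Real.rpow_add hx, Real.rpow_one,
    ← Real.sqrt_eq_rpow, one_div]

lemma stmt10_hder_lem (c a v : ℝ) (ha : 0 < a) :
    HasDerivAt (fun t => c / Real.sqrt (a + t * v)) (-(c * v) / (2 * a * Real.sqrt a)) 0 := by
  have hg : HasDerivAt (fun t : ℝ => a + t * v) v 0 := by
    simpa using ((hasDerivAt_id (0:ℝ)).mul_const v).const_add a
  have h1 : HasDerivAt Real.sqrt (1 / (2 * Real.sqrt a)) (a + 0 * v) := by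
    simpa using Real.hasDerivAt_sqrt ha.ne'
  have hs := h1.comp 0 hg
  have hne : Real.sqrt (a + 0 * v) ≠ 0 := by simpa using (Real.sqrt_pos.2 ha).ne'
  have hdiv := (hasDerivAt_const (0:ℝ) c).fun_div hs hne
  simp only [zero_mul, add_zero, Function.comp_def] at hdiv ⊢
  refine hdiv.congr_deriv ?_
  symm
  rw [Real.sq_sqrt ha.le]
  have h2 : Real.sqrt a ≠ 0 := (Real.sqrt_pos.2 ha).ne'
  rw [div_eq_div_iff (by positivity) ha.ne']
  field_simp
  ring


/-- For the problem min Σ p_l/√(q_l) s.t. 0 < q_l ≤ 1, Σ q_l ≤ B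
(with p_l > 0, 1 ≤ B < L): the objective is convex on the feasible set; at any
minimizer there is a KKT multiplier μ ≥ 0 with either q_l = 1 and p_l/2 ≥ μ, or
q_l < 1 and p_l·q_l^{-3/2}/2 = μ; and if the candidate q_l = B·p_l^{2/3}/Σ p_j^{2/3}
stays strictly below 1, it is optimal with value (Σ p_l^{2/3})^{3/2}/√B. -/
theorem stmt10 (L : ℕ) (hL : 0 < L) (p : Fin L → ℝ) (hp : ∀ l, 0 < p l)
    (B : ℝ) (hB1 : 1 ≤ B) (hBL : B < L)
    (feas : Set (Fin L → ℝ))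
    (hfeas : feas = {q | (∀ l, 0 < q l ∧ q l ≤ 1) ∧ ∑ l, q l ≤ B})
    (obj : (Fin L → ℝ) → ℝ)
    (hobj : ∀ q, obj q = ∑ l, p l / Real.sqrt (q l)) :
    ConvexOn ℝ feas obj ∧
    (∀ qs ∈ feas, (∀ q ∈ feas, obj qs ≤ obj q) →
      ∃ μ : ℝ, 0 ≤ μ ∧ ∀ l,
        (qs l = 1 ∧ μ ≤ p l / 2) ∨
        (qs l < 1 ∧ p l * qs l ^ (-(3 : ℝ) / 2) / 2 = μ)) ∧
    (∀ qh : Fin L → ℝ,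
      (∀ l, qh l = B * p l ^ ((2 : ℝ) / 3) / ∑ j, p j ^ ((2 : ℝ) / 3)) →
      (∀ l, qh l < 1) →
      qh ∈ feas ∧ (∀ q ∈ feas, obj qh ≤ obj q) ∧
        obj qh = (∑ l, p l ^ ((2 : ℝ) / 3)) ^ ((3 : ℝ) / 2) / Real.sqrt B) := by
  refine ⟨?_, ?_, ?_⟩
  · constructor
    · -- convexity of feas
      rw [hfeas]
      intro q hq r hr a b ha hb hab
      refine ⟨fun l => ?_, ?_⟩
      · constructor
        · simpa using stmt10_comb_pos (hq.1 l).1 (hr.1 l).1 ha hb hab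
        · have : a * q l + b * r l ≤ a * 1 + b * 1 :=
            add_le_add (mul_le_mul_of_nonneg_left (hq.1 l).2 ha)
              (mul_le_mul_of_nonneg_left (hr.1 l).2 hb)
          simpa [hab] using this
      · have : ∑ l, (a • q + b • r) l = a * ∑ l, q l + b * ∑ l, r l := by
          simp [Finset.mul_sum, Finset.sum_add_distrib]
        rw [this]
        calc a * ∑ l, q l + b * ∑ l, r l ≤ a * B + b * B :=
              add_le_add (mul_le_mul_of_nonneg_left hq.2 ha)
                (mul_le_mul_of_nonneg_left hr.2 hb)
          _ = B := by rw [← add_mul, hab, one_mul]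
    · intro q hq r hr a b ha hb hab
      rw [hfeas] at hq hr
      simp only [smul_eq_mul]
      rw [hobj, hobj, hobj, Finset.mul_sum, Finset.mul_sum, ← Finset.sum_add_distrib]
      refine Finset.sum_le_sum fun l _ => ?_
      exact stmt10_convex_step (p l) _ _ _ a b (hp l).le (hq.1 l).1 (hr.1 l).1 ha hb hab (by simp)
  · intro qs hqs hmin
    rw [hfeas] at hqs
    obtain ⟨hqs1, hqs2⟩ := hqs
    set D : Fin L → ℝ := fun k => p k * qs k ^ (-(3:ℝ)/2) / 2 with hDdef
    -- Step A: some coordinate below 1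
    have stepA : ∃ l0, qs l0 < 1 := by
      by_contra h
      push_neg at h
      have h1 : ∀ l, qs l = 1 := fun l => le_antisymm (hqs1 l).2 (h l)
      have : (L:ℝ) ≤ B := by
        calc (L:ℝ) = ∑ l : Fin L, qs l := by simp [h1]
          _ ≤ B := hqs2
      linarith
    obtain ⟨l0, hl0⟩ := stepA
    -- key lemma
    have key : ∀ i j : Fin L, i ≠ j → qs j < 1 → D j ≤ D i := by
      intro i j hij hj
      have hai : 0 < qs i := (hqs1 i).1
      have haj : 0 < qs j := (hqs1 j).1
      set ε : ℝ := min (qs i) (1 - qs j) with hε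
      have hε0 : 0 < ε := lt_min hai (by linarith)
      set d : Fin L → ℝ := fun l => if l = j then 1 else if l = i then -1 else 0 with hd
      have hdi : d i = -1 := by simp [hd, hij]
      have hdj : d j = 1 := by simp [hd]
      have hdsum : ∑ l, d l = 0 := by
        rw [← Finset.add_sum_erase _ _ (mem_univ j), hdj]
        have : ∀ l ∈ univ.erase j, d l = if l = i then -1 else 0 := by
          intro l hl
          simp only [hd]
          rw [if_neg (Finset.ne_of_mem_erase hl)]
        rw [Finset.sum_congr rfl this, Finset.sum_ite_eq' (univ.erase j) i fun _ => (-1:ℝ)]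
        rw [if_pos (Finset.mem_erase.2 ⟨hij, mem_univ i⟩)]
        ring
      -- feasibility of perturbation
      have hfeast : ∀ t ∈ Set.Ico (0:ℝ) ε, (qs + t • d) ∈ feas := by
        intro t ht
        rw [hfeas]
        constructor
        · intro l
          have happ : (qs + t • d) l = qs l + t * d l := by simp
          rw [happ]
          by_cases h1 : l = j
          · subst h1; rw [hdj]
            have : t < 1 - qs l := lt_of_lt_of_le ht.2 (min_le_right _ _)
            constructor <;> nlinarith [ht.1, (hqs1 l).1]
          · by_cases h2 : l = i
            · subst h2; rw [hdi]
              have : t < qs l := lt_of_lt_of_le ht.2 (min_le_left _ _)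
              constructor
              · linarith
              · nlinarith [ht.1, (hqs1 l).2]
            · have : d l = 0 := by simp [hd, h1, h2]
              rw [this]
              simpa using hqs1 l
        · have : ∑ l, (qs + t • d) l = ∑ l, qs l + t * ∑ l, d l := by
            simp [Finset.sum_add_distrib, Finset.mul_sum]
          rw [this, hdsum]
          simpa using hqs2
      -- the one-variable function
      set F : ℝ → ℝ := fun t => ∑ l, p l / Real.sqrt (qs l + t * d l) with hFdef
      have hF0 : F 0 = obj qs := by rw [hobj]; simp [hFdef]
      have hFt : ∀ t, F t = obj (qs + t • d) := by
        intro t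
        rw [hobj]
        refine Finset.sum_congr rfl fun l _ => ?_
        simp
      set F' : ℝ := ∑ l, -(p l * d l) / (2 * qs l * Real.sqrt (qs l)) with hF'def
      have hF : HasDerivAt F F' 0 :=
        HasDerivAt.fun_sum fun l _ => stmt10_hder_lem (p l) (qs l) (d l) (hqs1 l).1
      -- F' = D i - D j
      have hF'val : F' = D i - D j := by
        rw [hF'def]
        set g : Fin L → ℝ := fun l => -(p l * d l) / (2 * qs l * Real.sqrt (qs l)) with hg
        have hgz : ∀ l ∈ univ.erase j, g l = if l = i then g i else 0 := by
          intro l hl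
          by_cases h2 : l = i
          · rw [if_pos h2, h2]
          · rw [if_neg h2]
            have : d l = 0 := by simp [hd, Finset.ne_of_mem_erase hl, h2]
            simp [hg, this]
        rw [← Finset.add_sum_erase _ _ (mem_univ j), Finset.sum_congr rfl hgz,
          Finset.sum_ite_eq' (univ.erase j) i fun _ => g i,
          if_pos (Finset.mem_erase.2 ⟨hij, mem_univ i⟩)]
        have e2 : g i = p i / (2 * qs i * Real.sqrt (qs i)) := by
          rw [hg]; simp only [hdi]; rw [mul_neg_one, neg_neg]
        rw [hdj, mul_one, e2, hDdef]
        simp only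
        rw [stmt10_rpow_neg32 _ hai, stmt10_rpow_neg32 _ haj]
        have s1 := Real.sqrt_pos.2 hai
        have s2 := Real.sqrt_pos.2 haj
        field_simp
        ring
      -- one-sided first-order condition
      have slope_nonneg : ∀ᶠ t in nhdsWithin (0:ℝ) (Set.Ioi 0), 0 ≤ slope F 0 t := by
        filter_upwards [Ioo_mem_nhdsGT_of_mem (Set.mem_Ico.2 ⟨le_refl 0, hε0⟩)] with t ht
        have hfe := hfeast t (Set.mem_Ico.2 ⟨ht.1.le, ht.2⟩)
        have h2 : F 0 ≤ F t := by
          rw [hF0, hFt t]; exact hmin _ hfe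
        have : slope F 0 t = (F t - F 0) / t := by
          rw [slope_def_field]; ring_nf
        rw [this]
        exact div_nonneg (by linarith) ht.1.le
      have htend : Filter.Tendsto (slope F 0) (nhdsWithin 0 (Set.Ioi 0)) (nhds F') :=
        (hasDerivAt_iff_tendsto_slope.1 hF).mono_left
          (nhdsWithin_mono 0 fun x hx => ne_of_gt hx)
      have hF'nn : 0 ≤ F' := ge_of_tendsto htend slope_nonneg
      linarith [hF'val ▸ hF'nn]
    -- build μ
    refine ⟨D l0, ?_, ?_⟩
    · exact div_nonneg (mul_nonneg (hp l0).le
        (Real.rpow_pos_of_pos (hqs1 l0).1 _).le) (by norm_num)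
    · intro l
      rcases lt_or_eq_of_le (hqs1 l).2 with h | h
      · right
        refine ⟨h, ?_⟩
        by_cases hll : l = l0
        · subst hll; rfl
        · exact le_antisymm (key l0 l (Ne.symm hll) h) (key l l0 hll hl0)
      · left
        refine ⟨h, ?_⟩
        have hne : l ≠ l0 := by intro he; rw [he] at h; linarith
        have := key l l0 hne hl0
        have hDl : D l = p l / 2 := by
          rw [hDdef]; simp only; rw [h, Real.one_rpow]; ring
        linarith [hDl ▸ this]
  · intro qh hqh hqh1
    have hB0 : 0 < B := lt_of_lt_of_le one_pos hB1
    set S : ℝ := ∑ j, p j ^ ((2:ℝ)/3) with hS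
    have hS0 : 0 < S := Finset.sum_pos (fun j _ => Real.rpow_pos_of_pos (hp j) _)
      (univ_nonempty_iff.2 ⟨⟨0, hL⟩⟩)
    have hqhpos : ∀ l, 0 < qh l := fun l => by
      rw [hqh l]
      exact div_pos (mul_pos hB0 (Real.rpow_pos_of_pos (hp l) _)) hS0
    have hsum : ∑ l, qh l = B := by
      simp only [hqh]
      rw [← Finset.sum_div, ← Finset.mul_sum, ← hS, mul_div_assoc, div_self hS0.ne', mul_one]
    have hfeasqh : qh ∈ feas := by
      rw [hfeas]
      exact ⟨fun l => ⟨hqhpos l, (hqh1 l).le⟩, le_of_eq hsum⟩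
    -- key: p l / (qh l * sqrt (qh l)) = (S/B)^(3/2)
    have hK : ∀ l, p l / (qh l * Real.sqrt (qh l)) = (S / B) ^ ((3:ℝ)/2) := by
      intro l
      have h1 : qh l * Real.sqrt (qh l) = qh l ^ ((3:ℝ)/2) := by
        rw [Real.sqrt_eq_rpow, ← Real.rpow_one_add' (hqhpos l).le (by norm_num)]
        norm_num
      have h2 : (p l ^ ((2:ℝ)/3)) ^ ((3:ℝ)/2) = p l := by
        rw [← Real.rpow_mul (hp l).le]; norm_num
      rw [h1, hqh l, Real.div_rpow (mul_nonneg hB0.le (Real.rpow_pos_of_pos (hp l) _).le) hS0.le,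
        Real.mul_rpow hB0.le (Real.rpow_pos_of_pos (hp l) _).le, h2,
        Real.div_rpow hS0.le hB0.le]
      have hBne := (Real.rpow_pos_of_pos hB0 ((3:ℝ)/2)).ne'
      have hSne := (Real.rpow_pos_of_pos hS0 ((3:ℝ)/2)).ne'
      have hpne := (hp l).ne'
      field_simp
    -- optimality via stmt10_tangent line
    have hopt : ∀ q ∈ feas, obj qh ≤ obj q := by
      intro q hq
      rw [hfeas] at hq
      have key : ∀ l, p l / Real.sqrt (qh l) - (S/B) ^ ((3:ℝ)/2) / 2 * (q l - qh l)
          ≤ p l / Real.sqrt (q l) := by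
        intro l
        have := stmt10_tangent (p l) (qh l) (q l) (hp l).le (hqhpos l) (hq.1 l).1
        rwa [show p l / (qh l * Real.sqrt (qh l)) = (S/B) ^ ((3:ℝ)/2) from hK l] at this
      have hsum2 : ∑ l, (p l / Real.sqrt (qh l) - (S/B) ^ ((3:ℝ)/2) / 2 * (q l - qh l))
          ≤ ∑ l, p l / Real.sqrt (q l) := Finset.sum_le_sum fun l _ => key l
      rw [hobj, hobj]
      have hKnn : (0:ℝ) ≤ (S/B) ^ ((3:ℝ)/2) := (Real.rpow_pos_of_pos (div_pos hS0 hB0) _).le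
      have hqB : ∑ l, q l ≤ B := hq.2
      have expand : ∑ l, (p l / Real.sqrt (qh l) - (S/B) ^ ((3:ℝ)/2) / 2 * (q l - qh l))
          = (∑ l, p l / Real.sqrt (qh l)) - (S/B) ^ ((3:ℝ)/2) / 2 * ((∑ l, q l) - B) := by
        rw [Finset.sum_sub_distrib, ← Finset.mul_sum, Finset.sum_sub_distrib, hsum]
      rw [expand] at hsum2
      nlinarith [mul_nonneg (div_nonneg hKnn (by norm_num : (0:ℝ) ≤ 2)) (sub_nonneg.2 hqB)]
    refine ⟨hfeasqh, hopt, ?_⟩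
    -- value computation
    rw [hobj]
    have hval : ∀ l, p l / Real.sqrt (qh l) = p l ^ ((2:ℝ)/3) * (S ^ ((1:ℝ)/2) / B ^ ((1:ℝ)/2)) := by
      intro l
      have hs : Real.sqrt (qh l) = B ^ ((1:ℝ)/2) * p l ^ ((1:ℝ)/3) / S ^ ((1:ℝ)/2) := by
        rw [hqh l, Real.sqrt_eq_rpow,
          Real.div_rpow (mul_nonneg hB0.le (Real.rpow_pos_of_pos (hp l) _).le) hS0.le,
          Real.mul_rpow hB0.le (Real.rpow_pos_of_pos (hp l) _).le,
          ← Real.rpow_mul (hp l).le]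
        norm_num
      have hpsplit : p l ^ ((2:ℝ)/3) * p l ^ ((1:ℝ)/3) = p l := by
        rw [← Real.rpow_add (hp l)]; norm_num
      rw [hs, div_div_eq_mul_div, ← mul_div_assoc,
        div_eq_div_iff (mul_pos (Real.rpow_pos_of_pos hB0 _) (Real.rpow_pos_of_pos (hp l) _)).ne'
          (Real.rpow_pos_of_pos hB0 _).ne']
      linear_combination (-(S ^ ((1:ℝ)/2) * B ^ ((1:ℝ)/2))) * hpsplit
    rw [Finset.sum_congr rfl fun l _ => hval l, ← Finset.sum_mul, ← hS,
      Real.sqrt_eq_rpow]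
    rw [show S ^ ((3:ℝ)/2) = S * S ^ ((1:ℝ)/2) by
      rw [← Real.rpow_one_add' hS0.le (by norm_num)]; norm_num]
    ring
end

section
/- For the Zipf distribution p_l = l^{-τ}/Z_τ(L) with τ > 3/2, the quantity (Σ_{l=1}^{L} p_l^{2/3})^{3/2} is bounded above by a constant independent of L; consequently, with a cache budget B = Θ(1), one has Σ_l p_l·(q_l*)^{-1/2} = Θ(1) where q_l* = min(B·p_l^{2/3}/Σ p_j^{2/3}, 1). -/
/-- For Zipf popularity p_l = l^{-τ}/Z_τ(L) with τ > 3/2,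
(Σ_{l=1}^{L} p_l^{2/3})^{3/2} is bounded uniformly in L; consequently, for any fixed
cache budget B ≥ 1, Σ_l p_l·(q_l*)^{-1/2} with
q_l* = min(B·p_l^{2/3}/Σ p_j^{2/3}, 1) is Θ(1) in L. -/
theorem stmt12 (τ : ℝ) (hτ : 3 / 2 < τ)
    (p : ℕ → ℕ → ℝ)
    (hp : ∀ L l, p L l = (l : ℝ) ^ (-τ) / ∑ j ∈ Finset.Icc 1 L, (j : ℝ) ^ (-τ)) :
    (∃ C : ℝ, ∀ L : ℕ, 1 ≤ L →
      (∑ l ∈ Finset.Icc 1 L, p L l ^ ((2 : ℝ) / 3)) ^ ((3 : ℝ) / 2) ≤ C) ∧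
    (∀ B : ℝ, 1 ≤ B → ∃ c C : ℝ, 0 < c ∧ ∀ L : ℕ, 1 ≤ L →
      ∀ qs : ℕ → ℝ,
        (∀ l, qs l = min (B * p L l ^ ((2 : ℝ) / 3) /
          ∑ j ∈ Finset.Icc 1 L, p L j ^ ((2 : ℝ) / 3)) 1) →
        c ≤ ∑ l ∈ Finset.Icc 1 L, p L l * qs l ^ (-(1 : ℝ) / 2) ∧
          ∑ l ∈ Finset.Icc 1 L, p L l * qs l ^ (-(1 : ℝ) / 2) ≤ C) := by
  have hτ1 : -(2 * τ / 3) < -1 := by linarith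
  have hsum : Summable (fun n : ℕ => (n : ℝ) ^ (-(2 * τ / 3))) :=
    Real.summable_nat_rpow.mpr hτ1
  set S : ℝ := ∑' n : ℕ, (n : ℝ) ^ (-(2 * τ / 3)) with hSdef
  have hSnonneg : 0 ≤ S :=
    tsum_nonneg fun n => Real.rpow_nonneg n.cast_nonneg _
  -- Per-L key facts
  have key : ∀ L : ℕ, 1 ≤ L →
      0 < (∑ j ∈ Finset.Icc 1 L, p L j ^ ((2 : ℝ) / 3)) ∧
      (∑ j ∈ Finset.Icc 1 L, p L j ^ ((2 : ℝ) / 3)) ≤ S ∧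
      (∑ l ∈ Finset.Icc 1 L, p L l) = 1 ∧
      (∀ l ∈ Finset.Icc 1 L, 0 < p L l) := by
    intro L hL
    set Z : ℝ := ∑ j ∈ Finset.Icc 1 L, (j : ℝ) ^ (-τ) with hZdef
    have h1mem : (1 : ℕ) ∈ Finset.Icc 1 L := Finset.mem_Icc.mpr ⟨le_refl 1, hL⟩
    have hZterm : ∀ j ∈ Finset.Icc 1 L, (0 : ℝ) < (j : ℝ) ^ (-τ) := by
      intro j hj
      have hj1 : 1 ≤ j := (Finset.mem_Icc.mp hj).1
      have : (0 : ℝ) < j := by exact_mod_cast Nat.lt_of_lt_of_le Nat.zero_lt_one hj1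
      exact Real.rpow_pos_of_pos this _
    have hZ1 : 1 ≤ Z := by
      have := Finset.single_le_sum (f := fun j : ℕ => (j : ℝ) ^ (-τ))
        (fun j hj => (hZterm j hj).le) h1mem
      simpa using this
    have hZpos : 0 < Z := lt_of_lt_of_le one_pos hZ1
    have hppos : ∀ l ∈ Finset.Icc 1 L, 0 < p L l := by
      intro l hl
      rw [hp]
      exact div_pos (hZterm l hl) hZpos
    have hpsum : (∑ l ∈ Finset.Icc 1 L, p L l) = 1 := by
      have h1 : ∀ l ∈ Finset.Icc 1 L, p L l = (l : ℝ) ^ (-τ) / Z :=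
        fun l _ => hp L l
      rw [Finset.sum_congr rfl h1, ← Finset.sum_div, div_self hZpos.ne']
    have hTpos : 0 < (∑ j ∈ Finset.Icc 1 L, p L j ^ ((2 : ℝ) / 3)) := by
      refine Finset.sum_pos (fun j hj => Real.rpow_pos_of_pos (hppos j hj) _) ⟨1, h1mem⟩
    have hTeq : (∑ j ∈ Finset.Icc 1 L, p L j ^ ((2 : ℝ) / 3))
        = (∑ j ∈ Finset.Icc 1 L, (j : ℝ) ^ (-(2 * τ / 3))) / Z ^ ((2 : ℝ) / 3) := by
      rw [Finset.sum_div]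
      refine Finset.sum_congr rfl fun j hj => ?_
      rw [hp, Real.div_rpow (Real.rpow_nonneg j.cast_nonneg _) hZpos.le,
        ← Real.rpow_mul j.cast_nonneg]
      congr 2
      ring
    have hZ23 : 1 ≤ Z ^ ((2 : ℝ) / 3) := by
      have := Real.rpow_le_rpow (by norm_num : (0:ℝ) ≤ 1) hZ1 (by norm_num : (0:ℝ) ≤ 2/3)
      simpa using this
    have hA : (∑ j ∈ Finset.Icc 1 L, (j : ℝ) ^ (-(2 * τ / 3))) ≤ S :=
      Summable.sum_le_tsum _ (fun n _ => Real.rpow_nonneg n.cast_nonneg _) hsum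
    have hAnonneg : 0 ≤ (∑ j ∈ Finset.Icc 1 L, (j : ℝ) ^ (-(2 * τ / 3))) :=
      Finset.sum_nonneg fun n _ => Real.rpow_nonneg n.cast_nonneg _
    have hTle : (∑ j ∈ Finset.Icc 1 L, p L j ^ ((2 : ℝ) / 3)) ≤ S := by
      rw [hTeq]
      exact le_trans (div_le_self hAnonneg hZ23) hA
    exact ⟨hTpos, hTle, hpsum, hppos⟩
  constructor
  · refine ⟨S ^ ((3 : ℝ) / 2), fun L hL => ?_⟩
    obtain ⟨hTpos, hTle, -, -⟩ := key L hL
    exact Real.rpow_le_rpow hTpos.le hTle (by norm_num)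
  · intro B hB
    have hBpos : 0 < B := lt_of_lt_of_le one_pos hB
    refine ⟨1, S ^ ((3 : ℝ) / 2) + 1, one_pos, fun L hL qs hqs => ?_⟩
    obtain ⟨hTpos, hTle, hpsum, hppos⟩ := key L hL
    set T : ℝ := ∑ j ∈ Finset.Icc 1 L, p L j ^ ((2 : ℝ) / 3) with hTdef
    have hxpos : ∀ l ∈ Finset.Icc 1 L, 0 < B * p L l ^ ((2 : ℝ) / 3) / T := by
      intro l hl
      exact div_pos (mul_pos hBpos (Real.rpow_pos_of_pos (hppos l hl) _)) hTpos
    have hqpos : ∀ l ∈ Finset.Icc 1 L, 0 < qs l := by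
      intro l hl
      rw [hqs]
      exact lt_min (hxpos l hl) one_pos
    have hqle1 : ∀ l, qs l ≤ 1 := fun l => by rw [hqs]; exact min_le_right _ _
    constructor
    · -- lower bound
      calc (1 : ℝ) = ∑ l ∈ Finset.Icc 1 L, p L l := hpsum.symm
        _ ≤ ∑ l ∈ Finset.Icc 1 L, p L l * qs l ^ (-(1 : ℝ) / 2) := by
            refine Finset.sum_le_sum fun l hl => ?_
            have h1 : 1 ≤ qs l ^ (-(1 : ℝ) / 2) :=
              Real.one_le_rpow_of_pos_of_le_one_of_nonpos (hqpos l hl) (hqle1 l)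
                (by norm_num)
            nth_rewrite 1 [← mul_one (p L l)]
            exact mul_le_mul_of_nonneg_left h1 (hppos l hl).le
    · -- upper bound
      have hpoint : ∀ l ∈ Finset.Icc 1 L,
          p L l * qs l ^ (-(1 : ℝ) / 2)
            ≤ B ^ (-(1 : ℝ) / 2) * T ^ ((1 : ℝ) / 2) * p L l ^ ((2 : ℝ) / 3)
              + p L l := by
        intro l hl
        set a : ℝ := p L l with hadef
        have ha : 0 < a := hppos l hl
        set x : ℝ := B * a ^ ((2 : ℝ) / 3) / T with hxdef
        have hx : 0 < x := hxpos l hl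
        have hxneg : x ^ (-(1 : ℝ) / 2) ≤ x ^ (-(1 : ℝ) / 2) := le_refl _
        have hqbound : qs l ^ (-(1 : ℝ) / 2) ≤ x ^ (-(1 : ℝ) / 2) + 1 := by
          rw [hqs]
          rcases le_total x 1 with hx1 | hx1
          · rw [min_eq_left hx1]
            have : (0:ℝ) ≤ 1 := zero_le_one
            linarith [this]
          · rw [min_eq_right hx1]
            have h1 : ((1:ℝ)) ^ (-(1 : ℝ) / 2) = 1 := Real.one_rpow _
            rw [h1]
            have : 0 ≤ x ^ (-(1 : ℝ) / 2) := Real.rpow_nonneg hx.le _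
            linarith
        have hxval : a * x ^ (-(1 : ℝ) / 2)
            = B ^ (-(1 : ℝ) / 2) * T ^ ((1 : ℝ) / 2) * a ^ ((2 : ℝ) / 3) := by
          rw [hxdef, Real.div_rpow (by positivity) hTpos.le,
            Real.mul_rpow hBpos.le (Real.rpow_nonneg ha.le _),
            ← Real.rpow_mul ha.le]
          have h1 : ((2 : ℝ) / 3) * (-(1 : ℝ) / 2) = -(1 : ℝ) / 3 := by norm_num
          rw [h1, show (-(1 : ℝ) / 2) = -((1 : ℝ) / 2) by norm_num,
            Real.rpow_neg hTpos.le, div_eq_mul_inv, inv_inv]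
          have h2 : a * a ^ (-(1 : ℝ) / 3) = a ^ ((2 : ℝ) / 3) := by
            nth_rewrite 1 [← Real.rpow_one a]
            rw [← Real.rpow_add ha]
            norm_num
          rw [← h2]
          ring
        calc a * qs l ^ (-(1 : ℝ) / 2)
            ≤ a * (x ^ (-(1 : ℝ) / 2) + 1) := mul_le_mul_of_nonneg_left hqbound ha.le
          _ = a * x ^ (-(1 : ℝ) / 2) + a := by ring
          _ = B ^ (-(1 : ℝ) / 2) * T ^ ((1 : ℝ) / 2) * a ^ ((2 : ℝ) / 3) + a := by
              rw [hxval]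
      calc ∑ l ∈ Finset.Icc 1 L, p L l * qs l ^ (-(1 : ℝ) / 2)
          ≤ ∑ l ∈ Finset.Icc 1 L,
              (B ^ (-(1 : ℝ) / 2) * T ^ ((1 : ℝ) / 2) * p L l ^ ((2 : ℝ) / 3)
                + p L l) := Finset.sum_le_sum hpoint
        _ = B ^ (-(1 : ℝ) / 2) * T ^ ((1 : ℝ) / 2) * T + 1 := by
            rw [Finset.sum_add_distrib, ← Finset.mul_sum, hpsum, ← hTdef]
        _ = B ^ (-(1 : ℝ) / 2) * T ^ ((3 : ℝ) / 2) + 1 := by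
            have : T ^ ((1 : ℝ) / 2) * T = T ^ ((3 : ℝ) / 2) := by
              nth_rewrite 2 [← Real.rpow_one T]
              rw [← Real.rpow_add hTpos]
              norm_num
            rw [mul_assoc, this]
        _ ≤ 1 * S ^ ((3 : ℝ) / 2) + 1 := by
            have hB1 : B ^ (-(1 : ℝ) / 2) ≤ 1 :=
              Real.rpow_le_one_of_one_le_of_nonpos hB (by norm_num)
            have hT32 : T ^ ((3 : ℝ) / 2) ≤ S ^ ((3 : ℝ) / 2) :=
              Real.rpow_le_rpow hTpos.le hTle (by norm_num)
            have hBnn : 0 ≤ B ^ (-(1 : ℝ) / 2) := Real.rpow_nonneg hBpos.le _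
            have hTnn : 0 ≤ T ^ ((3 : ℝ) / 2) := Real.rpow_nonneg hTpos.le _
            nlinarith
        _ = S ^ ((3 : ℝ) / 2) + 1 := by ring
end

section
/- For the Zipf distribution p_l = l^{-τ}/Z_τ(L) with 0 ≤ τ < 1 and the uniform replication q_l = B/L (with 1 ≤ B ≤ L), one has Σ_{l=1}^{L} p_l/√(q_l) = √(L/B). More generally, for 0 ≤ τ < 1, the minimum over feasible q (0 < q_l ≤ 1, Σ q_l ≤ B) of Σ p_l/√(q_l) is Θ(√(L/B)) as L → ∞. -/
open Real Finset

lemma aux_bern {τ : ℝ} (hτ0 : 0 ≤ τ) (hτ1 : τ < 1) {x : ℝ} (hx : 1 ≤ x) :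
    (1 - τ) * x ^ (-τ) ≤ x ^ (1 - τ) - (x - 1) ^ (1 - τ) := by
  have hx0 : (0:ℝ) < x := lt_of_lt_of_le one_pos hx
  have hs0 : 0 ≤ 1 - τ := by linarith
  have hs1 : 1 - τ ≤ 1 := by linarith
  have hinv : -1 ≤ -(1/x) := by
    have : 1/x ≤ 1 := by rw [div_le_one hx0]; exact hx
    linarith
  have hb := rpow_one_add_le_one_add_mul_self hinv hs0 hs1
  have he : 1 + -(1/x) = (x - 1)/x := by field_simp; ring
  rw [he] at hb
  have hxm : 0 ≤ (x-1)/x := div_nonneg (by linarith) hx0.le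
  have key : (x-1)^(1-τ) = ((x-1)/x)^(1-τ) * x^(1-τ) := by
    rw [← Real.mul_rpow hxm hx0.le, div_mul_cancel₀ _ hx0.ne']
  have hxs : 0 < x ^ (1-τ) := Real.rpow_pos_of_pos hx0 _
  have h2 : ((x-1)/x)^(1-τ) * x^(1-τ) ≤ (1 + (1-τ) * -(1/x)) * x^(1-τ) :=
    mul_le_mul_of_nonneg_right hb hxs.le
  have hpow : x ^ (-τ) = x ^ (1-τ) / x := by
    rw [show (-τ) = (1-τ) - 1 by ring, Real.rpow_sub_one hx0.ne']
  have h3 : (1 + (1-τ) * -(1/x)) * x^(1-τ) = x^(1-τ) - (1-τ)*(x^(1-τ)/x) := by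
    ring
  rw [key, hpow]
  linarith

lemma aux_Z {τ : ℝ} (hτ0 : 0 ≤ τ) (hτ1 : τ < 1) (L : ℕ) :
    ∑ j ∈ Finset.Icc 1 L, (j:ℝ)^(-τ) ≤ (L:ℝ)^(1-τ) / (1-τ) := by
  have hs : 0 < 1 - τ := by linarith
  rw [le_div_iff₀ hs]
  have hre : ∑ j ∈ Finset.Icc 1 L, (j:ℝ)^(-τ) = ∑ i ∈ Finset.range L, ((1+i:ℕ):ℝ)^(-τ) := by
    rw [← Finset.Ico_add_one_right_eq_Icc, Finset.sum_Ico_eq_sum_range]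
    simp
  rw [hre, Finset.sum_mul]
  have htel : ∑ i ∈ Finset.range L, ((((i+1):ℕ):ℝ)^(1-τ) - ((i:ℕ):ℝ)^(1-τ))
      = ((L:ℕ):ℝ)^(1-τ) - ((0:ℕ):ℝ)^(1-τ) :=
    Finset.sum_range_sub (fun i => ((i:ℕ):ℝ)^(1-τ)) L
  have h0 : ((0:ℕ):ℝ)^(1-τ) = 0 := by
    simp [Real.zero_rpow hs.ne']
  calc ∑ i ∈ Finset.range L, ((1+i:ℕ):ℝ)^(-τ) * (1-τ)
      ≤ ∑ i ∈ Finset.range L, ((((i+1):ℕ):ℝ)^(1-τ) - ((i:ℕ):ℝ)^(1-τ)) := by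
        apply Finset.sum_le_sum
        intro i _
        have h1 : (1:ℝ) ≤ ((1+i:ℕ):ℝ) := by push_cast; linarith [Nat.cast_nonneg (α := ℝ) i]
        have hb := aux_bern hτ0 hτ1 h1
        have e1 : ((1+i:ℕ):ℝ) - 1 = ((i:ℕ):ℝ) := by push_cast; ring
        have e2 : ((1+i:ℕ):ℝ) = (((i+1):ℕ):ℝ) := by push_cast; ring
        rw [e2] at hb ⊢
        rw [show (((i+1):ℕ):ℝ) - 1 = ((i:ℕ):ℝ) by push_cast; ring] at hb
        linarith
    _ = (L:ℝ)^(1-τ) := by rw [htel, h0]; simp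

lemma aux_low {u : ℝ} (hu : 0 ≤ u) (L : ℕ) (hL : 1 ≤ L) :
    (L:ℝ)^(1-u) ≤ ∑ j ∈ Finset.Icc 1 L, (j:ℝ)^(-u) := by
  have hL0 : (0:ℝ) < L := by exact_mod_cast hL
  have key : ∀ j ∈ Finset.Icc 1 L, (L:ℝ)^(-u) ≤ (j:ℝ)^(-u) := by
    intro j hj
    simp only [Finset.mem_Icc] at hj
    exact Real.rpow_le_rpow_of_nonpos (by exact_mod_cast hj.1) (by exact_mod_cast hj.2)
      (by linarith)
  have hcard : (Finset.Icc 1 L).card = L := by simp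
  calc (L:ℝ)^(1-u) = (L:ℝ) * (L:ℝ)^(-u) := by
        rw [show (1-u) = 1 + (-u) by ring, Real.rpow_add hL0, Real.rpow_one]
    _ = (Finset.Icc 1 L).card • ((L:ℝ)^(-u)) := by rw [hcard, nsmul_eq_mul]
    _ ≤ ∑ j ∈ Finset.Icc 1 L, (j:ℝ)^(-u) := Finset.card_nsmul_le_sum _ _ _ key



/-- For Zipf popularity with 0 ≤ τ < 1 and uniform replication
q_l = B/L (1 ≤ B ≤ L), Σ p_l/√(q_l) = √(L/B); moreover the minimum of Σ p_l/√(q_l)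
over feasible q (0 < q_l ≤ 1, Σ q_l ≤ B) is Θ(√(L/B)) as L → ∞. -/
theorem stmt13 (τ : ℝ) (hτ0 : 0 ≤ τ) (hτ1 : τ < 1)
    (p : ℕ → ℕ → ℝ)
    (hp : ∀ L l, p L l = (l : ℝ) ^ (-τ) / ∑ j ∈ Finset.Icc 1 L, (j : ℝ) ^ (-τ))
    (B : ℕ → ℝ) (hB : ∀ L : ℕ, 1 ≤ L → 1 ≤ B L ∧ B L ≤ L) :
    (∀ L : ℕ, 1 ≤ L →
      ∑ l ∈ Finset.Icc 1 L, p L l / Real.sqrt (B L / L) = Real.sqrt (L / B L)) ∧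
    (∃ c C : ℝ, 0 < c ∧ 0 < C ∧ ∃ L₀ : ℕ, ∀ L ≥ L₀,
      (∀ q : ℕ → ℝ, (∀ l ∈ Finset.Icc 1 L, 0 < q l ∧ q l ≤ 1) →
        (∑ l ∈ Finset.Icc 1 L, q l ≤ B L) →
        c * Real.sqrt (L / B L) ≤ ∑ l ∈ Finset.Icc 1 L, p L l / Real.sqrt (q l)) ∧
      (∃ q : ℕ → ℝ, (∀ l ∈ Finset.Icc 1 L, 0 < q l ∧ q l ≤ 1) ∧
        (∑ l ∈ Finset.Icc 1 L, q l ≤ B L) ∧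
        ∑ l ∈ Finset.Icc 1 L, p L l / Real.sqrt (q l) ≤ C * Real.sqrt (L / B L))) := by
  have hZpos : ∀ L : ℕ, 1 ≤ L → 0 < ∑ j ∈ Finset.Icc 1 L, (j:ℝ)^(-τ) := by
    intro L hL
    apply Finset.sum_pos
    · intro j hj
      simp only [Finset.mem_Icc] at hj
      exact Real.rpow_pos_of_pos (by exact_mod_cast hj.1) _
    · exact ⟨1, Finset.mem_Icc.mpr ⟨le_refl 1, hL⟩⟩
  have hsum1 : ∀ L : ℕ, 1 ≤ L → ∑ l ∈ Finset.Icc 1 L, p L l = 1 := by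
    intro L hL
    simp only [hp]
    rw [← Finset.sum_div, div_self (hZpos L hL).ne']
  have part1 : ∀ L : ℕ, 1 ≤ L →
      ∑ l ∈ Finset.Icc 1 L, p L l / Real.sqrt (B L / L) = Real.sqrt (L / B L) := by
    intro L hL
    rw [← Finset.sum_div, hsum1 L hL,
      show ((L:ℝ) / B L) = (B L / (L:ℝ))⁻¹ by rw [inv_div], Real.sqrt_inv, one_div]
  refine ⟨part1, 1 - τ, 1, by linarith, one_pos, 1, fun L hL => ?_⟩
  obtain ⟨hB1, hBL⟩ := hB L hL
  have hL0 : (0:ℝ) < L := by exact_mod_cast hL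
  have hB0 : (0:ℝ) < B L := lt_of_lt_of_le one_pos hB1
  have hZp := hZpos L hL
  have hpnn : ∀ l ∈ Finset.Icc 1 L, 0 ≤ p L l := by
    intro l hl
    rw [hp]
    exact div_nonneg (Real.rpow_nonneg (Nat.cast_nonneg l) _) hZp.le
  have hsqrtdiv : Real.sqrt ((L:ℝ) / B L) = (L:ℝ) ^ ((1:ℝ)/2) / (B L) ^ ((1:ℝ)/2) := by
    rw [Real.sqrt_eq_rpow, Real.div_rpow hL0.le hB0.le]
  constructor
  · -- lower bound
    intro q hq hqB
    set A := ∑ l ∈ Finset.Icc 1 L, p L l / Real.sqrt (q l) with hA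
    have hAnn : 0 ≤ A :=
      Finset.sum_nonneg fun l hl => div_nonneg (hpnn l hl) (Real.sqrt_nonneg _)
    have hpq : Real.HolderConjugate (3/2) 3 := Real.holderConjugate_iff.mpr ⟨by norm_num, by norm_num⟩
    have hold := Real.inner_le_Lp_mul_Lq_of_nonneg (Finset.Icc 1 L)
      (f := fun l => (p L l / Real.sqrt (q l)) ^ ((2:ℝ)/3))
      (g := fun l => (q l) ^ ((1:ℝ)/3)) hpq
      (fun l hl => Real.rpow_nonneg (div_nonneg (hpnn l hl) (Real.sqrt_nonneg _)) _)
      (fun l hl => Real.rpow_nonneg (hq l hl).1.le _)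
    -- simplify the three sums in hold
    have e1 : ∀ l ∈ Finset.Icc 1 L,
        (p L l / Real.sqrt (q l)) ^ ((2:ℝ)/3) * (q l) ^ ((1:ℝ)/3) = (p L l) ^ ((2:ℝ)/3) := by
      intro l hl
      obtain ⟨hq0, _⟩ := hq l hl
      have hsq : Real.sqrt (q l) = (q l) ^ ((1:ℝ)/2) := Real.sqrt_eq_rpow _
      rw [Real.div_rpow (hpnn l hl) (Real.sqrt_nonneg _), hsq,
        ← Real.rpow_mul hq0.le]
      have : (q l) ^ ((1:ℝ)/2 * (2/3)) = (q l) ^ ((1:ℝ)/3) := by norm_num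
      rw [this, div_mul_cancel₀]
      exact (Real.rpow_pos_of_pos hq0 _).ne'
    have e2 : ∀ l ∈ Finset.Icc 1 L,
        ((p L l / Real.sqrt (q l)) ^ ((2:ℝ)/3)) ^ ((3:ℝ)/2) = p L l / Real.sqrt (q l) := by
      intro l hl
      rw [← Real.rpow_mul (div_nonneg (hpnn l hl) (Real.sqrt_nonneg _))]
      norm_num
    have e3 : ∀ l ∈ Finset.Icc 1 L, ((q l) ^ ((1:ℝ)/3)) ^ ((3:ℝ)) = q l := by
      intro l hl
      rw [← Real.rpow_mul (hq l hl).1.le]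
      norm_num
    rw [Finset.sum_congr rfl e1, Finset.sum_congr rfl e2, Finset.sum_congr rfl e3] at hold
    have h13 : (1:ℝ) / (3/2) = 2/3 := by norm_num
    have h13' : (1:ℝ) / 3 = 1/3 := by norm_num
    rw [h13] at hold
    -- hold : ∑ p^{2/3} ≤ A^{2/3} * (∑ q)^{1/3}
    have hqsum_nn : 0 ≤ ∑ l ∈ Finset.Icc 1 L, q l :=
      Finset.sum_nonneg fun l hl => (hq l hl).1.le
    have hstep1 : ∑ l ∈ Finset.Icc 1 L, (p L l) ^ ((2:ℝ)/3)
        ≤ A ^ ((2:ℝ)/3) * (B L) ^ ((1:ℝ)/3) := by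
      refine hold.trans ?_
      exact mul_le_mul_of_nonneg_left
        (Real.rpow_le_rpow hqsum_nn hqB (by norm_num)) (Real.rpow_nonneg hAnn _)
    -- lower bound on ∑ p^{2/3}
    have hstep2 : (1-τ) ^ ((2:ℝ)/3) * (L:ℝ) ^ ((1:ℝ)/3)
        ≤ ∑ l ∈ Finset.Icc 1 L, (p L l) ^ ((2:ℝ)/3) := by
      have hZle := aux_Z hτ0 hτ1 L
      set Z := ∑ j ∈ Finset.Icc 1 L, (j:ℝ)^(-τ) with hZdef
      have hrw : ∀ l ∈ Finset.Icc 1 L,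
          (p L l) ^ ((2:ℝ)/3) = ((l:ℝ) ^ (-(2*τ/3))) / Z ^ ((2:ℝ)/3) := by
        intro l hl
        simp only [Finset.mem_Icc] at hl
        rw [hp, Real.div_rpow (Real.rpow_nonneg (Nat.cast_nonneg l) _) hZp.le,
          ← Real.rpow_mul (Nat.cast_nonneg l)]
        norm_num
        ring_nf
      rw [Finset.sum_congr rfl hrw, ← Finset.sum_div]
      have hlow := aux_low (u := 2*τ/3) (by linarith) L hL
      have hden : Z ^ ((2:ℝ)/3) ≤ ((L:ℝ)^(1-τ)/(1-τ)) ^ ((2:ℝ)/3) :=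
        Real.rpow_le_rpow hZp.le hZle (by norm_num)
      have hdenpos : 0 < Z ^ ((2:ℝ)/3) := Real.rpow_pos_of_pos hZp _
      have h1 : ((L:ℝ)^(1-(2*τ/3))) / (((L:ℝ)^(1-τ)/(1-τ)) ^ ((2:ℝ)/3))
          ≤ ((L:ℝ)^(1-(2*τ/3))) / Z ^ ((2:ℝ)/3) := by
        apply div_le_div_of_nonneg_left (Real.rpow_nonneg hL0.le _) hdenpos hden
      have h2 : ((L:ℝ)^(1-(2*τ/3))) / Z ^ ((2:ℝ)/3)
          ≤ (∑ l ∈ Finset.Icc 1 L, (l:ℝ) ^ (-(2*τ/3))) / Z ^ ((2:ℝ)/3) := by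
        gcongr
      have hτs : (0:ℝ) < 1 - τ := by linarith
      have hLpow : (L:ℝ)^(1-(2*τ/3)) = (L:ℝ)^((1:ℝ)/3) * (L:ℝ)^((1-τ)*(2/3)) := by
        rw [← Real.rpow_add hL0]
        congr 1
        ring
      have h3 : (1-τ) ^ ((2:ℝ)/3) * (L:ℝ) ^ ((1:ℝ)/3)
          = ((L:ℝ)^(1-(2*τ/3))) / (((L:ℝ)^(1-τ)/(1-τ)) ^ ((2:ℝ)/3)) := by
        rw [Real.div_rpow (Real.rpow_nonneg hL0.le _) hτs.le,
          ← Real.rpow_mul hL0.le, hLpow]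
        have h4 : (0:ℝ) < (L:ℝ)^((1-τ)*(2/3)) := Real.rpow_pos_of_pos hL0 _
        have h5 : (0:ℝ) < (1-τ)^((2:ℝ)/3) := Real.rpow_pos_of_pos hτs _
        field_simp
      rw [h3]
      exact h1.trans h2
    have hcomb := hstep2.trans hstep1
    -- raise to power 3/2
    have hτs : (0:ℝ) < 1 - τ := by linarith
    have hlhs_nn : 0 ≤ (1-τ) ^ ((2:ℝ)/3) * (L:ℝ) ^ ((1:ℝ)/3) :=
      mul_nonneg (Real.rpow_nonneg hτs.le _) (Real.rpow_nonneg hL0.le _)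
    have hfin := Real.rpow_le_rpow hlhs_nn hcomb (by norm_num : (0:ℝ) ≤ 3/2)
    have hl : ((1-τ) ^ ((2:ℝ)/3) * (L:ℝ) ^ ((1:ℝ)/3)) ^ ((3:ℝ)/2)
        = (1-τ) * (L:ℝ) ^ ((1:ℝ)/2) := by
      rw [Real.mul_rpow (Real.rpow_nonneg hτs.le _) (Real.rpow_nonneg hL0.le _),
        ← Real.rpow_mul hτs.le, ← Real.rpow_mul hL0.le]
      norm_num
    have hr : (A ^ ((2:ℝ)/3) * (B L) ^ ((1:ℝ)/3)) ^ ((3:ℝ)/2)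
        = A * (B L) ^ ((1:ℝ)/2) := by
      rw [Real.mul_rpow (Real.rpow_nonneg hAnn _) (Real.rpow_nonneg hB0.le _),
        ← Real.rpow_mul hAnn, ← Real.rpow_mul hB0.le]
      norm_num
    rw [hl, hr] at hfin
    rw [hsqrtdiv]
    have hBp : 0 < (B L) ^ ((1:ℝ)/2) := Real.rpow_pos_of_pos hB0 _
    have heq : (1-τ) * ((L:ℝ) ^ ((1:ℝ)/2) / (B L) ^ ((1:ℝ)/2))
        = ((1-τ) * (L:ℝ) ^ ((1:ℝ)/2)) / (B L) ^ ((1:ℝ)/2) := by ring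
    rw [heq, div_le_iff₀ hBp]
    exact hfin
  · -- upper bound
    refine ⟨fun _ => B L / L, fun l hl => ⟨div_pos hB0 hL0, (div_le_one hL0).mpr hBL⟩, ?_, ?_⟩
    · rw [Finset.sum_const, Nat.card_Icc, nsmul_eq_mul]
      simp only [Nat.add_sub_cancel]
      rw [mul_div_cancel₀ _ hL0.ne']
    · rw [one_mul]
      exact le_of_eq (part1 L hL)
end

section
/- Define φ(q) = ⌈(-1+√(2/q−1))/2⌉ and ψ(q) = φ(q)(1−q) − (2/3)(φ(q)³ − φ(q))·q for q ∈ (0,1]. Then ψ(q) ≥ 0 for all q ∈ (0,1], ψ(1) = 0, and ψ(q) = Θ(1/√q) as q → 0⁺. -/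
set_option maxHeartbeats 1600000 in
/-- With φ(q) = ⌈(-1+√(2/q-1))/2⌉ and
ψ(q) = φ(q)(1-q) - (2/3)(φ(q)³ - φ(q))·q, we have ψ(q) ≥ 0 on (0,1], ψ(1) = 0, and
ψ(q) = Θ(1/√q) as q → 0⁺. -/
theorem stmt15 (φ ψ : ℝ → ℝ)
    (hφ : ∀ q : ℝ, φ q = (⌈(-1 + Real.sqrt (2 / q - 1)) / 2⌉ : ℤ))
    (hψ : ∀ q : ℝ, ψ q = φ q * (1 - q) - 2 / 3 * (φ q ^ 3 - φ q) * q) :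
    (∀ q : ℝ, 0 < q → q ≤ 1 → 0 ≤ ψ q) ∧
    ψ 1 = 0 ∧
    (∃ c C δ : ℝ, 0 < c ∧ 0 < C ∧ 0 < δ ∧ ∀ q : ℝ, 0 < q → q < δ →
      c / Real.sqrt q ≤ ψ q ∧ ψ q ≤ C / Real.sqrt q) := by
  refine ⟨?_, ?_, ?_⟩
  · intro q hq0 hq1
    rw [hψ q, hφ q]
    set x := Real.sqrt (2 / q - 1) with hxdef
    set n : ℤ := ⌈(-1 + x) / 2⌉ with hndef
    have hx0 : 0 ≤ x := Real.sqrt_nonneg _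
    have harg : (0:ℝ) ≤ 2 / q - 1 := by
      have : 1 ≤ 2 / q := by rw [le_div_iff₀ hq0]; linarith
      linarith
    have hx2 : x ^ 2 = 2 / q - 1 := Real.sq_sqrt harg
    have hqx2 : q * x ^ 2 = 2 - q := by
      rw [hx2]; field_simp
    have hx1 : 1 ≤ x := by nlinarith [hqx2, hx0, sq_nonneg (x - 1)]
    have hn_lo : (-1 + x) / 2 ≤ (n : ℝ) := Int.le_ceil _
    have hn_hi : (n : ℝ) < (-1 + x) / 2 + 1 := Int.ceil_lt_add_one _
    have hN0 : (0:ℝ) ≤ (n : ℝ) := le_trans (by linarith) hn_lo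
    have hqx : q * x ≤ 2 - q := by
      nlinarith [hqx2, mul_nonneg hq0.le hx0]
    have hNsq : (n:ℝ) * n ≤ ((x + 1) / 2) * ((x + 1) / 2) :=
      mul_self_le_mul_self hN0 (by linarith)
    have hq2N : q * ((n:ℝ) * n) ≤ q * (((x + 1) / 2) * ((x + 1) / 2)) :=
      mul_le_mul_of_nonneg_left hNsq hq0.le
    have hA : q * (2 * (n:ℝ) ^ 2 + 1) ≤ 3 := by nlinarith [hq2N, hqx2, hqx]
    nlinarith [mul_nonneg hN0 (show (0:ℝ) ≤ 3 - q * (2 * (n:ℝ) ^ 2 + 1) by linarith)]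
  · rw [hψ 1, hφ 1]
    norm_num
  · refine ⟨1/12, 2, 1/8, by norm_num, by norm_num, by norm_num, ?_⟩
    intro q hq0 hqδ
    have hq1 : q ≤ 1 := by linarith
    set x := Real.sqrt (2 / q - 1) with hxdef
    set n : ℤ := ⌈(-1 + x) / 2⌉ with hndef
    have hval : ψ q = (n:ℝ) * (1 - q) - 2 / 3 * ((n:ℝ) ^ 3 - (n:ℝ)) * q := by
      rw [hψ q, hφ q]
    have hx0 : 0 ≤ x := Real.sqrt_nonneg _
    have harg : (0:ℝ) ≤ 2 / q - 1 := by
      have : 1 ≤ 2 / q := by rw [le_div_iff₀ hq0]; linarith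
      linarith
    have hx2 : x ^ 2 = 2 / q - 1 := Real.sq_sqrt harg
    have hqx2 : q * x ^ 2 = 2 - q := by rw [hx2]; field_simp
    have hx1 : 1 ≤ x := by nlinarith [hqx2, hx0, sq_nonneg (x - 1)]
    have hn_lo : (-1 + x) / 2 ≤ (n : ℝ) := Int.le_ceil _
    have hn_hi : (n : ℝ) < (-1 + x) / 2 + 1 := Int.ceil_lt_add_one _
    have hN0 : (0:ℝ) ≤ (n : ℝ) := le_trans (by linarith) hn_lo
    set s := Real.sqrt q with hsdef
    have hs0 : 0 < s := Real.sqrt_pos.mpr hq0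
    have hs2 : s ^ 2 = q := Real.sq_sqrt hq0.le
    have hs_half : s ≤ 1/2 := by nlinarith [hs2, hs0]
    have hsx2 : (s * x) ^ 2 = 2 - q := by rw [mul_pow, hs2]; exact hqx2
    have hsx_lo : 1 ≤ s * x := by
      nlinarith [hsx2, mul_nonneg hs0.le hx0]
    have hsx_hi : s * x ≤ 3/2 := by
      nlinarith [hsx2, mul_nonneg hs0.le hx0]
    have hsN_lo : 1/4 ≤ s * (n:ℝ) := by
      have h1 := mul_le_mul_of_nonneg_left hn_lo hs0.le
      nlinarith [h1, hsx_lo, hs_half]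
    have hsN_hi : s * (n:ℝ) ≤ 1 := by
      have h1 := mul_le_mul_of_nonneg_left hn_hi.le hs0.le
      linarith [h1, hsx_hi, hs_half]
    have hqx34 : q * x ≤ 3/4 := by
      have hrw : q * x = s * (s * x) := by rw [← hs2]; ring
      rw [hrw]
      have h1 : s * (s * x) ≤ s * (3/2) := mul_le_mul_of_nonneg_left hsx_hi hs0.le
      linarith
    have hNsq : (n:ℝ) * n ≤ ((x + 1) / 2) * ((x + 1) / 2) :=
      mul_self_le_mul_self hN0 (by linarith)
    have hq2N : q * ((n:ℝ) * n) ≤ q * (((x + 1) / 2) * ((x + 1) / 2)) :=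
      mul_le_mul_of_nonneg_left hNsq hq0.le
    have hA : q * (2 * (n:ℝ) ^ 2 + 1) ≤ 2 := by nlinarith [hq2N, hqx2, hqx34]
    have hA0 : 0 ≤ q * (2 * (n:ℝ) ^ 2 + 1) := by positivity
    have hψ_lo : (n:ℝ) / 3 ≤ ψ q := by
      rw [hval]
      nlinarith [mul_nonneg hN0 (show (0:ℝ) ≤ 2 - q * (2 * (n:ℝ) ^ 2 + 1) by linarith)]
    have hψ_hi : ψ q ≤ (n:ℝ) := by
      rw [hval]
      nlinarith [mul_nonneg hN0 hA0]
    constructor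
    · rw [div_le_iff₀ hs0]
      nlinarith [hψ_lo, hsN_lo, hs0]
    · rw [le_div_iff₀ hs0]
      nlinarith [hψ_hi, hsN_hi, hs0.le, mul_nonneg (show (0:ℝ) ≤ (n:ℝ) - ψ q by linarith) hs0.le]
end
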